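/- Let Y be a standard normal random variable and let G : ℝ → ℝ be a monotone (nondecreasing or nonincreasing), right-continuous function, and let u ∈ ℝ be such that 0 < P(G(Y) > u) < 1. Then E[Y · 1{G(Y) > u}] ≠ 0. In particular, the Hermite rank of the function y ↦ 1{G(y) > u} − P(G(Y) > u) equals 1. -/

import Mathlib

open MeasureTheory ProbabilityTheory Set Real Filter

noncomputable section

lemma gaussPDF_eq : gaussianPDFReal 0 1 =
    fun y : ℝ => (Real.sqrt (2 * π))⁻¹ * Real.exp (-(1/2) * y ^ 2) := by
  funext y
  simp only [gaussianPDFReal, NNReal.coe_one, mul_one, sub_zero]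
  ring_nf

lemma integrable_mul_gaussPDF :
    Integrable (fun y : ℝ => gaussianPDFReal 0 1 y * y) := by
  have h := integrable_mul_exp_neg_mul_sq (b := 1/2) (by norm_num)
  have heq : (fun y : ℝ => gaussianPDFReal 0 1 y * y)
      = fun y => (Real.sqrt (2 * π))⁻¹ * (y * Real.exp (-(1/2) * y ^ 2)) := by
    funext y; rw [gaussPDF_eq]; ring
  rw [heq]
  exact h.const_mul _

lemma hasDerivAt_negPDF (a : ℝ) :
    HasDerivAt (fun y => -(gaussianPDFReal 0 1 y)) (gaussianPDFReal 0 1 a * a) a := by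
  rw [gaussPDF_eq]
  have h1 : HasDerivAt (fun y : ℝ => -(1/2) * y ^ 2) (-(1/2) * (2 * a)) a := by
    simpa using (hasDerivAt_pow 2 a).const_mul (-(1/2 : ℝ))
  have h2 := (h1.exp.const_mul ((Real.sqrt (2 * π))⁻¹)).neg
  refine HasDerivAt.congr_deriv h2 ?_
  ring

lemma tendsto_pdf_atTop : Tendsto (fun y => -(gaussianPDFReal 0 1 y)) atTop (nhds 0) := by
  rw [gaussPDF_eq]
  have h1 : Tendsto (fun y : ℝ => -(1/2) * y ^ 2) atTop atBot := by
    apply Tendsto.const_mul_atTop_of_neg (by norm_num)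
    exact tendsto_pow_atTop (by norm_num)
  have := ((Real.tendsto_exp_atBot.comp h1).const_mul ((Real.sqrt (2 * π))⁻¹)).neg
  simpa using this

lemma integral_Ioi_id_gaussian (a : ℝ) :
    ∫ y in Ioi a, y ∂(gaussianReal 0 1) = gaussianPDFReal 0 1 a := by
  have hw : gaussianReal 0 1 = volume.withDensity
      (fun x => ((gaussianPDFReal 0 1 x).toNNReal : ENNReal)) := by
    rw [gaussianReal_of_var_ne_zero 0 one_ne_zero]
    rfl
  rw [hw, setIntegral_withDensity_eq_setIntegral_smul
    (measurable_gaussianPDFReal 0 1).real_toNNReal _ measurableSet_Ioi]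
  have heq : ∀ y : ℝ, (gaussianPDFReal 0 1 y).toNNReal • y
      = gaussianPDFReal 0 1 y * y := by
    intro y
    rw [NNReal.smul_def, Real.coe_toNNReal _ (gaussianPDFReal_nonneg 0 1 y), smul_eq_mul]
  rw [setIntegral_congr_fun measurableSet_Ioi (fun y _ => heq y)]
  have := integral_Ioi_of_hasDerivAt_of_tendsto
    (f := fun y => -(gaussianPDFReal 0 1 y)) (f' := fun y => gaussianPDFReal 0 1 y * y)
    (a := a) (m := 0)
    (hasDerivAt_negPDF a).continuousAt.continuousWithinAt
    (fun x _ => hasDerivAt_negPDF x)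
    (integrable_mul_gaussPDF.integrableOn)
    tendsto_pdf_atTop
  rw [this]
  ring

lemma gauss_map_neg :
    Measure.map (fun x : ℝ => -x) (gaussianReal 0 1) = gaussianReal 0 1 := by
  have h := gaussianReal_map_const_mul (μ := 0) (v := 1) (-1)
  have h1 : (fun x : ℝ => -1 * x) = fun x : ℝ => -x := by funext x; ring
  have h2 : (⟨(-1 : ℝ) ^ 2, sq_nonneg _⟩ : NNReal) * 1 = 1 := by
    ext; norm_num
  rw [h1, mul_zero] at h
  convert h using 2
  ext; simp

lemma integral_Iio_id_gaussian (b : ℝ) :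
    ∫ y in Iio b, y ∂(gaussianReal 0 1) = -gaussianPDFReal 0 1 (-b) := by
  have hmeas : Measurable fun y : ℝ => (Iio b).indicator id y :=
    measurable_id.indicator measurableSet_Iio
  calc ∫ y in Iio b, y ∂(gaussianReal 0 1)
      = ∫ y, (Iio b).indicator id y ∂(gaussianReal 0 1) :=
        (integral_indicator measurableSet_Iio).symm
    _ = ∫ y, (Iio b).indicator id y ∂(Measure.map (fun x : ℝ => -x) (gaussianReal 0 1)) := by
        rw [gauss_map_neg]
    _ = ∫ x, (Iio b).indicator id (-x) ∂(gaussianReal 0 1) := by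
        rw [integral_map measurable_neg.aemeasurable hmeas.aestronglyMeasurable]
    _ = ∫ x, -((Ioi (-b)).indicator id x) ∂(gaussianReal 0 1) := by
        congr 1; funext x
        simp only [indicator_apply, mem_Iio, mem_Ioi, id_eq]
        by_cases hx : -b < x
        · rw [if_pos (by linarith), if_pos hx]
        · rw [if_neg (by linarith), if_neg hx, neg_zero]
    _ = -∫ x in Ioi (-b), x ∂(gaussianReal 0 1) := by
        rw [integral_neg, integral_indicator measurableSet_Ioi]
        simp only [id_eq]
    _ = -gaussianPDFReal 0 1 (-b) := by rw [integral_Ioi_id_gaussian]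

lemma gauss_singleton (a : ℝ) : gaussianReal 0 1 {a} = 0 :=
  gaussianReal_absolutelyContinuous 0 one_ne_zero (volume_singleton)

/-- for a monotone right-continuous `G` and a level `u` with
`0 < P(G(Y) > u) < 1`, one has `E[Y·1{G(Y) > u}] ≠ 0`; i.e. the function
`y ↦ 1{G(y) > u} − P(G(Y) > u)` has Hermite rank 1. -/
theorem hermite_rank_one_indicator {Ω : Type*} [MeasurableSpace Ω]
    (P : Measure Ω) [IsProbabilityMeasure P]
    (Y : Ω → ℝ) (hYmeas : Measurable Y)
    (hY : Measure.map Y P = gaussianReal 0 1)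
    (G : ℝ → ℝ) (hGmono : Monotone G ∨ Antitone G)
    (hGrc : ∀ x, ContinuousWithinAt G (Set.Ici x) x)
    (u : ℝ) (hu : 0 < P {ω | u < G (Y ω)}) (hu' : P {ω | u < G (Y ω)} < 1) :
    (∫ ω, (if u < G (Y ω) then Y ω else 0) ∂P) ≠ 0 := by
  have hGmeas : Measurable G := by
    rcases hGmono with h | h
    · exact h.measurable
    · exact h.measurable
  set A : Set ℝ := {y : ℝ | u < G y} with hAdef
  have hAmeas : MeasurableSet A := measurableSet_lt measurable_const hGmeas
  set γ := gaussianReal 0 1 with hγdef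
  -- measures transfer
  have hPA : P {ω | u < G (Y ω)} = γ A := by
    rw [← hY, Measure.map_apply hYmeas hAmeas]
    rfl
  have hγpos : 0 < γ A := hPA ▸ hu
  have hγlt : γ A < 1 := hPA ▸ hu'
  -- integral transfer
  have hfmeas : Measurable fun y : ℝ => if u < G y then y else 0 :=
    Measurable.ite hAmeas measurable_id measurable_const
  have htrans : (∫ ω, (if u < G (Y ω) then Y ω else 0) ∂P)
      = ∫ y in A, y ∂γ := by
    have h1 : (∫ ω, (if u < G (Y ω) then Y ω else 0) ∂P)
        = ∫ y, (if u < G y then y else 0) ∂(Measure.map Y P) := by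
      rw [integral_map hYmeas.aemeasurable hfmeas.aestronglyMeasurable]
    rw [h1, hY]
    have h2 : (fun y : ℝ => if u < G y then y else 0) = A.indicator id := by
      funext y
      simp only [indicator_apply, hAdef, mem_setOf_eq, id_eq]
    rw [h2, integral_indicator hAmeas]
    simp only [id_eq]
  rw [htrans]
  have hne : A.Nonempty := nonempty_of_measure_ne_zero hγpos.ne'
  rcases hGmono with hmono | hanti
  · -- monotone : A is an upper set
    have hupper : ∀ x ∈ A, ∀ y, x ≤ y → y ∈ A := fun x hx y hxy =>
      lt_of_lt_of_le hx (hmono hxy)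
    have hbdd : BddBelow A := by
      by_contra hb
      have hAuniv : A = univ := by
        ext y
        simp only [mem_univ, iff_true]
        obtain ⟨x, hxA, hxy⟩ := not_bddBelow_iff.mp hb y
        exact hupper x hxA y hxy.le
      rw [hAuniv] at hγlt
      simp at hγlt
    set a := sInf A with hadef
    have hsub1 : Ioi a ⊆ A := fun y hy => by
      obtain ⟨x, hxA, hxy⟩ := exists_lt_of_csInf_lt hne hy
      exact hupper x hxA y hxy.le
    have hsub2 : A ⊆ Ici a := fun x hx => csInf_le hbdd hx
    have haeq : A =ᵐ[γ] Ioi a := by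
      rw [MeasureTheory.ae_eq_set]
      constructor
      · refine measure_mono_null (fun x hx => ?_) (gauss_singleton a)
        exact le_antisymm (not_lt.mp hx.2) (hsub2 hx.1)
      · refine measure_mono_null (fun x hx => (hx.2 (hsub1 hx.1)).elim) (gauss_singleton a)
    rw [setIntegral_congr_set haeq, hγdef, integral_Ioi_id_gaussian]
    exact (gaussianPDFReal_pos 0 1 a one_ne_zero).ne'
  · -- antitone : A is a lower set
    have hlower : ∀ x ∈ A, ∀ y, y ≤ x → y ∈ A := fun x hx y hyx =>
      lt_of_lt_of_le hx (hanti hyx)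
    have hbdd : BddAbove A := by
      by_contra hb
      have hAuniv : A = univ := by
        ext y
        simp only [mem_univ, iff_true]
        obtain ⟨x, hxA, hxy⟩ := not_bddAbove_iff.mp hb y
        exact hlower x hxA y hxy.le
      rw [hAuniv] at hγlt
      simp at hγlt
    set b := sSup A with hbdef
    have hsub1 : Iio b ⊆ A := fun y hy => by
      obtain ⟨x, hxA, hxy⟩ := exists_lt_of_lt_csSup hne hy
      exact hlower x hxA y hxy.le
    have hsub2 : A ⊆ Iic b := fun x hx => le_csSup hbdd hx
    have haeq : A =ᵐ[γ] Iio b := by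
      rw [MeasureTheory.ae_eq_set]
      constructor
      · refine measure_mono_null (fun x hx => ?_) (gauss_singleton b)
        exact le_antisymm (hsub2 hx.1) (not_lt.mp hx.2)
      · refine measure_mono_null (fun x hx => (hx.2 (hsub1 hx.1)).elim) (gauss_singleton b)
    rw [setIntegral_congr_set haeq, hγdef, integral_Iio_id_gaussian]
    simpa using (gaussianPDFReal_pos 0 1 (-b) one_ne_zero).ne'

end
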